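/- Let p be a prime, n ≥ 2, and k ≥ 1 integers. Then |SL_n(ℤ/p^kℤ)| = p^{(k-1)(n²-1)} · |SL_n(ℤ/pℤ)|. -/

import Mathlib

open Matrix

lemma det_one_add_smul_of_sq {R : Type*} [CommRing R] {n : Type*} [Fintype n] [DecidableEq n]
    {r : R} (h : r * r = 0) (N : Matrix n n R) :
    det (1 + r • N) = 1 + trace N * r := by
  rw [Matrix.det_one_add_smul]
  simp [pow_two, h]

lemma zk_sq (p k : ℕ) (hk : 1 ≤ k) :
    ((p ^ k : ℕ) : ZMod (p ^ (k + 1))) * ((p ^ k : ℕ) : ZMod (p ^ (k + 1))) = 0 := by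
  rw [← Nat.cast_mul, ZMod.natCast_eq_zero_iff, ← pow_add]
  exact pow_dvd_pow p (by omega)

lemma trace_lift (p n k : ℕ) (M : Matrix (Fin n) (Fin n) (ZMod p)) :
    trace (M.map fun x => ((x.val : ℕ) : ZMod (p ^ (k + 1)))) * ((p ^ k : ℕ) : ZMod (p ^ (k + 1)))
      = (((∑ i, (M i i).val) * p ^ k : ℕ) : ZMod (p ^ (k + 1))) := by
  rw [trace]
  push_cast
  rw [Finset.sum_mul]
  simp [Matrix.map_apply, Matrix.diag, Finset.sum_mul]

lemma trace_cast (p n : ℕ) (hp : p.Prime) (M : Matrix (Fin n) (Fin n) (ZMod p)) :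
    trace M = ((∑ i, (M i i).val : ℕ) : ZMod p) := by
  haveI : NeZero p := ⟨hp.ne_zero⟩
  rw [trace]
  push_cast
  simp [ZMod.natCast_zmod_val, Matrix.diag]

lemma card_ker_eq (p n k : ℕ) (hp : p.Prime) (hn : 2 ≤ n) (hk : 1 ≤ k) :
    Nat.card (MonoidHom.ker (SpecialLinearGroup.map (n := Fin n)
        (ZMod.castHom (pow_dvd_pow p (Nat.le_succ k)) (ZMod (p ^ k)))))
      = Nat.card {M : Matrix (Fin n) (Fin n) (ZMod p) // trace M = 0} := by
  haveI : NeZero p := ⟨hp.ne_zero⟩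
  haveI : NeZero n := ⟨by omega⟩
  haveI : NeZero (p ^ k) := ⟨pow_ne_zero _ hp.ne_zero⟩
  haveI : NeZero (p ^ (k + 1)) := ⟨pow_ne_zero _ hp.ne_zero⟩
  set f := ZMod.castHom (pow_dvd_pow p (Nat.le_succ k)) (ZMod (p ^ k)) with hf
  set r : ZMod (p ^ (k + 1)) := ((p ^ k : ℕ) : ZMod (p ^ (k + 1))) with hr
  set c : ZMod p → ZMod (p ^ (k + 1)) := fun x => ((x.val : ℕ) : ZMod (p ^ (k + 1))) with hc
  have hrr : r * r = 0 := zk_sq p k hk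
  have hfr : f r = 0 := by
    rw [hr, map_natCast, ZMod.natCast_eq_zero_iff]
  -- det of a lift
  have hdetlift : ∀ M : Matrix (Fin n) (Fin n) (ZMod p),
      det (1 + r • (M.map c)) = 1 + (((∑ i, (M i i).val) * p ^ k : ℕ) : ZMod (p ^ (k + 1))) := by
    intro M
    rw [det_one_add_smul_of_sq hrr, hc, trace_lift p n k M]
  -- the candidate map
  have hdet1 : ∀ M : {M : Matrix (Fin n) (Fin n) (ZMod p) // trace M = 0},
      det (1 + r • ((M : Matrix (Fin n) (Fin n) (ZMod p)).map c)) = 1 := by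
    rintro ⟨M, hM⟩
    rw [hdetlift M]
    rw [trace_cast p n hp M, ZMod.natCast_eq_zero_iff] at hM
    have : (p ^ (k + 1)) ∣ (∑ i, (M i i).val) * p ^ k := by
      rw [pow_succ']
      exact mul_dvd_mul hM dvd_rfl
    rw [(ZMod.natCast_eq_zero_iff _ _).mpr this, add_zero]
  have hker1 : ∀ M : Matrix (Fin n) (Fin n) (ZMod p),
      f.mapMatrix (1 + r • (M.map c)) = 1 := by
    intro M
    ext i j
    rcases eq_or_ne i j with rfl | hij
    · simp [RingHom.mapMatrix_apply, Matrix.map_apply, Matrix.add_apply, Matrix.smul_apply,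
        Matrix.one_apply_eq, hfr, smul_eq_mul, map_add, f.map_mul]
    · simp [RingHom.mapMatrix_apply, Matrix.map_apply, Matrix.add_apply, Matrix.smul_apply,
        Matrix.one_apply_ne hij, hfr, smul_eq_mul, map_add, f.map_mul]
  set L : {M : Matrix (Fin n) (Fin n) (ZMod p) // trace M = 0} →
      MonoidHom.ker (SpecialLinearGroup.map (n := Fin n) f) := fun M =>
    ⟨⟨1 + r • ((M : Matrix (Fin n) (Fin n) (ZMod p)).map c), hdet1 M⟩, by
      refine MonoidHom.mem_ker.mpr ?_
      apply Subtype.ext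
      show f.mapMatrix _ = _
      exact hker1 M⟩ with hL
  have hbij : Function.Bijective L := by
    constructor
    · rintro ⟨M₁, hM₁⟩ ⟨M₂, hM₂⟩ h
      have h' : (1 : Matrix (Fin n) (Fin n) (ZMod (p^(k+1)))) + r • (M₁.map c)
          = 1 + r • (M₂.map c) := congrArg (fun x => x.1.1) h
      have h'' : r • (M₁.map c) = r • (M₂.map c) := by
        exact add_left_cancel h'
      ext i j
      have he : r * c (M₁ i j) = r * c (M₂ i j) := by
        have := congrFun (congrFun h'' i) j
        simpa [Matrix.smul_apply, Matrix.map_apply, smul_eq_mul] using this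
      rw [hr, hc] at he
      have he2 : ((p ^ k * (M₁ i j).val : ℕ) : ZMod (p ^ (k + 1)))
          = ((p ^ k * (M₂ i j).val : ℕ) : ZMod (p ^ (k + 1))) := by
        push_cast
        simpa using he
      have hm := (ZMod.natCast_eq_natCast_iff _ _ _).mp he2
      have hlt : ∀ x : ZMod p, p ^ k * x.val < p ^ (k + 1) := fun x => by
        rw [pow_succ]
        exact mul_lt_mul_of_pos_left (ZMod.val_lt x) (pow_pos hp.pos k)
      have := hm.eq_of_lt_of_lt (hlt _) (hlt _)
      exact ZMod.val_injective p (Nat.eq_of_mul_eq_mul_left (pow_pos hp.pos k) this)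
    · rintro ⟨A, hA⟩
      rw [MonoidHom.mem_ker] at hA
      set N : Matrix (Fin n) (Fin n) (ZMod (p ^ (k + 1))) :=
        (A : Matrix (Fin n) (Fin n) (ZMod (p ^ (k + 1)))) - 1 with hN
      have hmapN : f.mapMatrix N = 0 := by
        have : f.mapMatrix (A : Matrix (Fin n) (Fin n) (ZMod (p ^ (k + 1)))) = 1 := by
          rw [← SpecialLinearGroup.map_apply_coe, hA]; exact Matrix.SpecialLinearGroup.coe_one
        rw [hN, map_sub, this, f.mapMatrix.map_one, sub_self]
      have hdvd : ∀ i j, p ^ k ∣ (N i j).val := by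
        intro i j
        have h0 : f (N i j) = 0 := by
          have := congrFun (congrFun hmapN i) j
          simpa [RingHom.mapMatrix_apply, Matrix.map_apply] using this
        have : (((N i j).val : ℕ) : ZMod (p ^ k)) = 0 := by
          rwa [ZMod.natCast_val, ← ZMod.castHom_apply (h := pow_dvd_pow p (Nat.le_succ k))]
        exact (ZMod.natCast_eq_zero_iff _ _).mp this
      set M : Matrix (Fin n) (Fin n) (ZMod p) :=
        fun i j => (((N i j).val / p ^ k : ℕ) : ZMod p) with hM
      have hq : ∀ i j, (M i j).val = (N i j).val / p ^ k := by
        intro i j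
        rw [hM]
        show ((((N i j).val / p ^ k : ℕ) : ZMod p)).val = _
        rw [ZMod.val_natCast, Nat.mod_eq_of_lt]
        rw [Nat.div_lt_iff_lt_mul (pow_pos hp.pos k), mul_comm, ← pow_succ]
        exact ZMod.val_lt _
      have hlift : r • (M.map c) = N := by
        ext i j
        rw [Matrix.smul_apply, Matrix.map_apply, smul_eq_mul, hr, hc]
        show ((p ^ k : ℕ) : ZMod (p ^ (k+1))) * (((M i j).val : ℕ) : ZMod (p ^ (k+1))) = N i j
        rw [← Nat.cast_mul, hq, Nat.mul_div_cancel' (hdvd i j), ZMod.natCast_zmod_val]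
      have hAeq : (A : Matrix (Fin n) (Fin n) (ZMod (p ^ (k + 1)))) = 1 + r • (M.map c) := by
        rw [hlift, hN, add_sub_cancel]
      have htr : trace M = 0 := by
        have hdetA : det (1 + r • (M.map c)) = 1 := by rw [← hAeq]; exact A.2
        rw [hdetlift M] at hdetA
        have h0 : (((∑ i, (M i i).val) * p ^ k : ℕ) : ZMod (p ^ (k + 1))) = 0 :=
          add_eq_left.mp hdetA
        have hd := (ZMod.natCast_eq_zero_iff _ _).mp h0
        rw [pow_succ, mul_comm ((∑ i, (M i i).val)) (p ^ k)] at hd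
        have hpd : p ∣ ∑ i, (M i i).val :=
          (Nat.mul_dvd_mul_iff_left (pow_pos hp.pos k)).mp hd
        rw [trace_cast p n hp M, ZMod.natCast_eq_zero_iff]
        exact hpd
      refine ⟨⟨M, htr⟩, ?_⟩
      apply Subtype.ext
      apply Subtype.ext
      show (1 : Matrix (Fin n) (Fin n) (ZMod (p ^ (k+1)))) + r • (M.map c) = _
      rw [← hAeq]
  exact (Nat.card_eq_of_bijective L hbij).symm

lemma red_surj (p n k : ℕ) (hp : p.Prime) (hn : 2 ≤ n) (hk : 1 ≤ k) :
    Function.Surjective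
      (SpecialLinearGroup.map (n := Fin n)
        (ZMod.castHom (pow_dvd_pow p (Nat.le_succ k)) (ZMod (p ^ k)))) := by
  haveI : NeZero p := ⟨hp.ne_zero⟩
  haveI : NeZero n := ⟨by omega⟩
  haveI : NeZero (p ^ k) := ⟨pow_ne_zero _ hp.ne_zero⟩
  haveI : NeZero (p ^ (k + 1)) := ⟨pow_ne_zero _ hp.ne_zero⟩
  set f := ZMod.castHom (pow_dvd_pow p (Nat.le_succ k)) (ZMod (p ^ k)) with hf
  intro A
  set B : Matrix (Fin n) (Fin n) (ZMod (p ^ (k + 1))) :=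
    fun i j => (((A : Matrix (Fin n) (Fin n) (ZMod (p ^ k))) i j).val : ZMod (p ^ (k + 1)))
    with hB
  have hmapB : f.mapMatrix B = (A : Matrix (Fin n) (Fin n) (ZMod (p ^ k))) := by
    ext i j
    rw [RingHom.mapMatrix_apply, Matrix.map_apply, hB]; dsimp only
    rw [map_natCast, ZMod.natCast_zmod_val]
  have hdet : f (det B) = 1 := by
    rw [RingHom.map_det, hmapB, A.det_coe]
  have hval : (det B).val ≡ 1 [MOD p ^ k] := by
    have h1 : (((det B).val : ℕ) : ZMod (p ^ k)) = ((1 : ℕ) : ZMod (p ^ k)) := by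
      rw [Nat.cast_one]
      simpa [f, ZMod.castHom_apply, ZMod.natCast_val] using hdet
    exact (ZMod.natCast_eq_natCast_iff _ _ _).mp h1
  have hvalp : (det B).val ≡ 1 [MOD p] :=
    hval.of_dvd (dvd_pow_self p (by omega))
  have hnotdvd : ¬ p ∣ (det B).val := by
    intro hdvd
    have h0 : (det B).val ≡ 0 [MOD p] := (Nat.modEq_zero_iff_dvd).2 hdvd
    have h1 : (1 : ℕ) ≡ 0 [MOD p] := hvalp.symm.trans h0
    have h2 : p ∣ 1 := (Nat.modEq_zero_iff_dvd).1 h1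
    have := Nat.le_of_dvd one_pos h2
    have := hp.one_lt
    omega
  have hu : IsUnit (det B) := by
    rw [← ZMod.natCast_zmod_val (det B), ZMod.isUnit_iff_coprime]
    exact Nat.Coprime.pow_right _
      (Nat.coprime_comm.mp (hp.coprime_iff_not_dvd.mpr hnotdvd))
  obtain ⟨u, hu⟩ := hu
  set D : Matrix (Fin n) (Fin n) (ZMod (p ^ (k + 1))) :=
    diagonal (Function.update (1 : Fin n → ZMod (p ^ (k + 1))) 0 ↑u⁻¹) with hD
  have hdetD : det D = ↑u⁻¹ := by
    rw [hD, det_diagonal, Finset.prod_update_of_mem (Finset.mem_univ 0)]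
    simp
  have hfu : f ↑u = 1 := by rw [hu]; exact hdet
  have hfuinv : f ↑u⁻¹ = 1 := by
    have h1 : f (↑u⁻¹ * ↑u) = 1 := by rw [u.inv_mul, f.map_one]
    rwa [f.map_mul, hfu, mul_one] at h1
  have hmapD : f.mapMatrix D = 1 := by
    ext i j
    rcases eq_or_ne i j with rfl | hij
    · rcases eq_or_ne i 0 with rfl | h0
      · rw [RingHom.mapMatrix_apply, Matrix.map_apply, hD, diagonal_apply_eq,
          Function.update_self, hfuinv, Matrix.one_apply_eq]
      · rw [RingHom.mapMatrix_apply, Matrix.map_apply, hD, diagonal_apply_eq,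
          Function.update_of_ne h0, Pi.one_apply, f.map_one, Matrix.one_apply_eq]
    · rw [RingHom.mapMatrix_apply, Matrix.map_apply, hD, diagonal_apply_ne _ hij,
        map_zero, Matrix.one_apply_ne hij]
  have hdetBD : det (B * D) = 1 := by
    rw [det_mul, hdetD, ← hu, u.mul_inv]
  refine ⟨⟨B * D, hdetBD⟩, ?_⟩
  apply Subtype.ext
  show f.mapMatrix (B * D) = _
  rw [f.mapMatrix.map_mul, hmapB, hmapD, mul_one]

lemma card_traceless (p n : ℕ) (hp : p.Prime) (hn : 2 ≤ n) :
    Nat.card {M : Matrix (Fin n) (Fin n) (ZMod p) // trace M = 0} = p ^ (n ^ 2 - 1) := by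
  haveI : NeZero p := ⟨hp.ne_zero⟩
  haveI : NeZero n := ⟨by omega⟩
  set T : Matrix (Fin n) (Fin n) (ZMod p) →+ ZMod p := traceAddMonoidHom (Fin n) (ZMod p)
  have hsurj : Function.Surjective T := fun t =>
    ⟨Matrix.single 0 0 t, by simp [T, traceAddMonoidHom]⟩
  have h1 : Nat.card (Matrix (Fin n) (Fin n) (ZMod p)) = p ^ n ^ 2 := by
    show Nat.card (Fin n → Fin n → ZMod p) = _; simp [Nat.card_fun, Nat.card_zmod, sq, pow_mul]
  have h2 := AddSubgroup.card_eq_card_quotient_mul_card_addSubgroup T.ker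
  rw [h1, Nat.card_congr (QuotientAddGroup.quotientKerEquivOfSurjective T hsurj).toEquiv,
    Nat.card_eq_fintype_card (α := ZMod p), ZMod.card] at h2
  have hcard : Nat.card {M : Matrix (Fin n) (Fin n) (ZMod p) // trace M = 0}
      = Nat.card T.ker := Nat.card_congr (Equiv.subtypeEquivRight fun M => by
        simp [T, AddMonoidHom.mem_ker, traceAddMonoidHom])
  rw [hcard]
  have hn2 : 1 ≤ n ^ 2 := by nlinarith
  have hps : p ^ n ^ 2 = p * p ^ (n ^ 2 - 1) := by
    rw [← pow_succ']
    congr 1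
    omega
  rw [hps] at h2
  exact (Nat.eq_of_mul_eq_mul_left hp.pos h2).symm

lemma sl_step (p n k : ℕ) (hp : p.Prime) (hn : 2 ≤ n) (hk : 1 ≤ k) :
    Nat.card (SpecialLinearGroup (Fin n) (ZMod (p ^ (k + 1)))) =
      p ^ (n ^ 2 - 1) * Nat.card (SpecialLinearGroup (Fin n) (ZMod (p ^ k))) := by
  set φ := SpecialLinearGroup.map (n := Fin n)
    (ZMod.castHom (pow_dvd_pow p (Nat.le_succ k)) (ZMod (p ^ k))) with hφ
  have h1 := Subgroup.card_eq_card_quotient_mul_card_subgroup φ.ker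
  rw [Nat.card_congr (QuotientGroup.quotientKerEquivOfSurjective φ
      (red_surj p n k hp hn hk)).toEquiv, card_ker_eq p n k hp hn hk,
    card_traceless p n hp hn] at h1
  rw [h1, mul_comm]

/-- `|SL_n(ℤ/p^kℤ)| = p^{(k-1)(n²-1)} · |SL_n(ℤ/pℤ)|`. -/
theorem sl_n_zmod_pow_card (p : ℕ) (hp : p.Prime) (n : ℕ) (hn : 2 ≤ n)
    (k : ℕ) (hk : 1 ≤ k) :
    Nat.card (Matrix.SpecialLinearGroup (Fin n) (ZMod (p ^ k))) =
      p ^ ((k - 1) * (n ^ 2 - 1)) *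
        Nat.card (Matrix.SpecialLinearGroup (Fin n) (ZMod p)) := by
  induction k, hk using Nat.le_induction with
  | base => rw [pow_one p]; simp
  | succ k hk ih =>
    rw [sl_step p n k hp hn hk, ih, ← mul_assoc, ← pow_add]
    congr 2
    have : k - 1 + 1 = k := by omega
    rw [Nat.add_sub_cancel]
    calc n ^ 2 - 1 + (k - 1) * (n ^ 2 - 1) = (k - 1 + 1) * (n ^ 2 - 1) := by ring
      _ = k * (n ^ 2 - 1) := by rw [this]
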